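/- For any two nonempty subsets A, B of {1,...,n}, the probability over a uniformly random permutation π of {1,...,n} that min{π(a) : a ∈ A} = min{π(b) : b ∈ B} equals the Jaccard similarity |A ∩ B| / |A ∪ B|. -/

import Mathlib

open Finset

/-- For nonempty `A, B ⊆ {1,…,n}`, the number of permutations `π` of `{1,…,n}`
with `min π(A) = min π(B)` equals `n! · |A ∩ B| / |A ∪ B|`, stated
multiplicatively. -/
theorem stmt_3 (n : ℕ) (A B : Finset (Fin n)) (hA : A.Nonempty) (hB : B.Nonempty) :
    (Finset.univ.filter fun π : Equiv.Perm (Fin n) =>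
        (A.image π).min' (hA.image π) = (B.image π).min' (hB.image π)).card
      * (A ∪ B).card = Nat.factorial n * (A ∩ B).card := by
  classical
  set U := A ∪ B with hUdef
  have hU : U.Nonempty := hA.mono subset_union_left
  -- the argmin function
  set g : Equiv.Perm (Fin n) → Fin n :=
    fun π => π.symm ((U.image π).min' (hU.image π)) with hgdef
  have hval : ∀ π : Equiv.Perm (Fin n), π (g π) = (U.image π).min' (hU.image π) := by
    intro π; simp [hgdef]
  have hmem : ∀ π : Equiv.Perm (Fin n), g π ∈ U := by
    intro π
    have h := Finset.min'_mem (U.image π) (hU.image π)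
    obtain ⟨u, hu, hu2⟩ := Finset.mem_image.mp h
    have : g π = u := by
      simp [hgdef, ← hu2]
    rwa [this]
  have hle : ∀ (π : Equiv.Perm (Fin n)) (u : Fin n), u ∈ U → π (g π) ≤ π u := by
    intro π u hu
    rw [hval]
    exact Finset.min'_le _ _ (Finset.mem_image_of_mem π hu)
  -- membership characterization
  have hchar : ∀ (π : Equiv.Perm (Fin n)) (C : Finset (Fin n)) (hC : C.Nonempty),
      C ⊆ U → (g π ∈ C ↔ (C.image π).min' (hC.image π) = π (g π)) := by
    intro π C hC hCU
    constructor
    · intro hgC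
      refine le_antisymm (Finset.min'_le _ _ (Finset.mem_image_of_mem π hgC)) ?_
      obtain ⟨c, hc, hc2⟩ := Finset.mem_image.mp (Finset.min'_mem (C.image π) (hC.image π))
      rw [← hc2]
      exact hle π c (hCU hc)
    · intro h
      obtain ⟨c, hc, hc2⟩ := Finset.mem_image.mp (Finset.min'_mem (C.image π) (hC.image π))
      have : c = g π := π.injective (by rw [hc2, ← h])
      rwa [← this]
  -- the event iff argmin in A ∩ B
  have hiff : ∀ π : Equiv.Perm (Fin n),
      ((A.image π).min' (hA.image π) = (B.image π).min' (hB.image π)) ↔ g π ∈ A ∩ B := by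
    intro π
    rw [Finset.mem_inter, hchar π A hA subset_union_left, hchar π B hB subset_union_right]
    constructor
    · intro h
      rcases Finset.mem_union.mp (hmem π) with hgA | hgB
      · have h1 : (A.image π).min' (hA.image π) = π (g π) :=
          (hchar π A hA subset_union_left).mp hgA
        exact ⟨h1, h ▸ h1⟩
      · have h1 : (B.image π).min' (hB.image π) = π (g π) :=
          (hchar π B hB subset_union_right).mp hgB
        exact ⟨h ▸ h1, h1⟩
    · rintro ⟨h1, h2⟩; rw [h1, h2]
  -- fiber cardinalities are constant on U
  set c : Fin n → ℕ := fun x => (Finset.univ.filter fun π => g π = x).card with hcdef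
  have hswapim : ∀ x ∈ U, ∀ y ∈ U, U.image (Equiv.swap x y) = U := by
    intro x hx y hy
    have h1 : U.image (Equiv.swap x y) ⊆ U := by
      intro z hz
      obtain ⟨u, hu, hu2⟩ := Finset.mem_image.mp hz
      rcases eq_or_ne u x with rfl | hux
      · rw [Equiv.swap_apply_left] at hu2
        rwa [← hu2]
      rcases eq_or_ne u y with rfl | huy
      · rw [Equiv.swap_apply_right] at hu2
        rwa [← hu2]
      · rw [Equiv.swap_apply_of_ne_of_ne hux huy] at hu2; rwa [← hu2]
    exact Finset.eq_of_subset_of_card_le h1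
      (le_of_eq (Finset.card_image_of_injective U (Equiv.swap x y).injective).symm)
  have hgswap : ∀ x ∈ U, ∀ y ∈ U, ∀ π : Equiv.Perm (Fin n),
      g (π * Equiv.swap x y) = Equiv.swap x y (g π) := by
    intro x hx y hy π
    have him : U.image (π * Equiv.swap x y) = U.image π := by
      rw [show ⇑(π * Equiv.swap x y) = ⇑π ∘ ⇑(Equiv.swap x y) from rfl,
        ← Finset.image_image, hswapim x hx y hy]
    apply (π * Equiv.swap x y).injective
    have : (π * Equiv.swap x y) (Equiv.swap x y (g π)) = π (g π) := by
      simp [Equiv.Perm.mul_apply]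
    rw [this, hval, hval]
    simp only [him]
  have hconst : ∀ x ∈ U, ∀ y ∈ U, c x = c y := by
    intro x hx y hy
    apply Finset.card_nbij' (fun π => π * Equiv.swap x y) (fun π => π * Equiv.swap x y)
    · intro π hπ
      simp only [Finset.mem_coe, Finset.mem_filter, Finset.mem_univ, true_and] at hπ ⊢
      rw [hgswap x hx y hy π, hπ, Equiv.swap_apply_left]
    · intro π hπ
      simp only [Finset.mem_coe, Finset.mem_filter, Finset.mem_univ, true_and] at hπ ⊢
      rw [hgswap x hx y hy π, hπ, Equiv.swap_apply_right]
    · intro π hπ; simp [mul_assoc]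
    · intro π hπ; simp [mul_assoc]
  have hsum : ∑ x ∈ U, c x = Nat.factorial n := by
    rw [← Finset.card_eq_sum_card_fiberwise (fun π _ => hmem π)]
    simp [Fintype.card_perm]
  have hcx : ∀ x ∈ U, c x * U.card = Nat.factorial n := by
    intro x hx
    rw [← hsum]
    rw [Finset.sum_congr rfl (fun y hy => hconst y hy x hx)]
    simp [mul_comm]
  have hcount : (Finset.univ.filter fun π : Equiv.Perm (Fin n) =>
      (A.image π).min' (hA.image π) = (B.image π).min' (hB.image π)).card
      = ∑ x ∈ A ∩ B, c x := by
    rw [Finset.filter_congr (fun π _ => by rw [hiff π])]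
    rw [Finset.card_eq_sum_card_fiberwise (s := Finset.univ.filter fun π => g π ∈ A ∩ B) (t := A ∩ B) (f := g) (fun π hπ => (Finset.mem_filter.mp hπ).2)]
    refine Finset.sum_congr rfl fun x hx => ?_
    congr 1
    rw [Finset.filter_filter]
    refine Finset.filter_congr fun π _ => ?_
    constructor
    · exact fun h => h.2
    · exact fun h => ⟨h ▸ hx, h⟩
  rw [hcount, Finset.sum_mul]
  rw [Finset.sum_congr rfl (fun x hx => hcx x (Finset.mem_of_mem_inter_left hx |> fun h => Finset.mem_union_left B h))]
  simp [mul_comm]
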